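/- arXiv:2504.02021 — 2 statements merged into one kernel-verified Lean document; each statement's English description precedes it below -/
import Mathlib

section
/- Let T be an odomutant on X = ∏_{n≥0}{0,…,q_n−1} built from the odometer S via permutations σ^{(n)}_i, and let φ : ℝ₊ → ℝ₊ be non-decreasing. If the series ∑_n φ(h_{n+1})/h_n converges, where h_n = q_0⋯q_{n−1}, then the identity map of X is a φ-integrable orbit equivalence between S and T: the cocycles c_S and c_T satisfy ∫_X φ(|c_S|)dμ < ∞ and ∫_X φ(|c_T|)dμ < ∞. -/
open MeasureTheory

noncomputable section

namespace OdoAux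

lemma downward_induction (n : ℕ) (P : ℕ → Prop) (hn : ∀ k, n ≤ k → P k)
    (hstep : ∀ k, k < n → P (k + 1) → P k) : ∀ k, P k := by
  have key : ∀ j k, n ≤ k + j → P k := by
    intro j
    induction j with
    | zero => intro k hk; exact hn k (by omega)
    | succ j ih =>
      intro k hk
      by_cases h' : n ≤ k + j
      · exact ih k h'
      · exact hstep k (by omega) (ih (k + 1) (by omega))
  exact fun k => key n k (by omega)

lemma cycle_lemma {α : Type*} (R : Equiv.Perm α) (C : Set α) (p : α → ℕ) (H : ℕ)
    (hinj : ∀ a ∈ C, ∀ b ∈ C, p a = p b → a = b)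
    (hstep : ∀ z ∈ C, p z + 1 < H → R z ∈ C ∧ p (R z) = p z + 1)
    (hlt : ∀ z ∈ C, p z < H) :
    ∀ x ∈ C, ∀ y ∈ C, (R ^ ((p y : ℤ) - (p x : ℤ))) x = y := by
  have claim : ∀ d, ∀ x ∈ C, p x + d < H → (R ^ d) x ∈ C ∧ p ((R ^ d) x) = p x + d := by
    intro d
    induction d with
    | zero => intro x hx _; exact ⟨by simpa using hx, by simp⟩
    | succ d ih =>
      intro x hx hlt'
      obtain ⟨h1, h2⟩ := ih x hx (by omega)
      have h3 := hstep _ h1 (by rw [h2]; omega)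
      rw [pow_succ']
      refine ⟨?_, ?_⟩
      · simpa [Equiv.Perm.mul_apply] using h3.1
      · simp only [Equiv.Perm.mul_apply]
        rw [h3.2, h2]; omega
  have forward : ∀ x ∈ C, ∀ y ∈ C, p x ≤ p y → (R ^ (p y - p x)) x = y := by
    intro x hx y hy hle
    obtain ⟨h1, h2⟩ := claim (p y - p x) x hx (by have := hlt y hy; omega)
    exact hinj _ h1 _ hy (by rw [h2]; omega)
  intro x hx y hy
  rcases le_total (p x) (p y) with hle | hle
  · have := forward x hx y hy hle
    rw [show (p y : ℤ) - (p x : ℤ) = ((p y - p x : ℕ) : ℤ) by omega, zpow_natCast]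
    exact this
  · have hfy := forward y hy x hx hle
    rw [show (p y : ℤ) - (p x : ℤ) = -((p x - p y : ℕ) : ℤ) by omega, zpow_neg, zpow_natCast]
    exact Equiv.Perm.inv_eq_iff_eq.mpr hfy.symm


/-- Enumeration of ℤ ordered by absolute value : 0, -1, 1, -2, 2, ... -/
def enumZ (m : ℕ) : ℤ := if m % 2 = 0 then ((m / 2 : ℕ) : ℤ) else -(((m / 2 : ℕ) : ℤ) + 1)

lemma enumZ_natAbs (m : ℕ) : (enumZ m).natAbs = (m + 1) / 2 := by
  unfold enumZ
  by_cases hm : m % 2 = 0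
  · rw [if_pos hm]
    simp only [Int.natAbs_natCast]
    omega
  · rw [if_neg hm, Int.natAbs_neg]
    have h1 : (((m / 2 : ℕ) : ℤ) + 1) = ((m / 2 + 1 : ℕ) : ℤ) := by push_cast; ring
    rw [h1, Int.natAbs_natCast]
    omega

lemma enumZ_surj (c : ℤ) : ∃ m, enumZ m = c ∧ (m + 1) / 2 = c.natAbs := by
  rcases le_or_gt 0 c with hc | hc
  · refine ⟨2 * c.natAbs, ?_, by omega⟩
    unfold enumZ
    rw [if_pos (by omega)]
    have h2 : (2 * c.natAbs) / 2 = c.natAbs := by omega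
    rw [h2]
    omega
  · refine ⟨2 * c.natAbs - 1, ?_, by omega⟩
    have h1 : 1 ≤ c.natAbs := by omega
    unfold enumZ
    rw [if_neg (by omega)]
    have h2 : (2 * c.natAbs - 1) / 2 = c.natAbs - 1 := by omega
    rw [h2]
    omega

lemma exists_min_pow {α : Type*} (R : Equiv.Perm α) (x y : α) (B : ℕ)
    (hex : ∃ c : ℤ, y = (R ^ c) x ∧ c.natAbs ≤ B) :
    y = (R ^ (enumZ (sInf {m | y = (R ^ enumZ m) x}))) x ∧
      (enumZ (sInf {m | y = (R ^ enumZ m) x})).natAbs ≤ B := by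
  obtain ⟨c, hc, hcB⟩ := hex
  obtain ⟨m, hm, hm2⟩ := enumZ_surj c
  have hmem : m ∈ {m | y = (R ^ enumZ m) x} := by rw [Set.mem_setOf_eq, hm]; exact hc
  have h1 := Nat.sInf_mem (⟨m, hmem⟩ : Set.Nonempty _)
  have h2 := Nat.sInf_le hmem
  refine ⟨h1, ?_⟩
  rw [enumZ_natAbs]
  calc (sInf {m | y = (R ^ enumZ m) x} + 1) / 2 ≤ (m + 1) / 2 := by omega
    _ = c.natAbs := hm2
    _ ≤ B := hcB

lemma measurable_sInf_mem {α : Type*} [MeasurableSpace α] (D : ℕ → Set α)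
    (hD : ∀ m, MeasurableSet (D m)) :
    Measurable (fun x => sInf {m | x ∈ D m}) := by
  apply measurable_to_countable'
  intro n
  by_cases hn : n = 0
  · subst hn
    have : (fun x => sInf {m | x ∈ D m}) ⁻¹' {0} = D 0 ∪ ⋂ m, (D m)ᶜ := by
      ext x
      simp only [Set.mem_preimage, Set.mem_singleton_iff, Set.mem_union, Set.mem_iInter,
        Set.mem_compl_iff, Nat.sInf_eq_zero]
      constructor
      · rintro (h | h)
        · exact Or.inl h
        · exact Or.inr (fun m hm => by rw [Set.eq_empty_iff_forall_notMem] at h; exact h m hm)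
      · rintro (h | h)
        · exact Or.inl h
        · exact Or.inr (Set.eq_empty_iff_forall_notMem.mpr h)
    rw [this]
    exact (hD 0).union (MeasurableSet.iInter (fun m => (hD m).compl))
  · have : (fun x => sInf {m | x ∈ D m}) ⁻¹' {n} = D n ∩ ⋂ m, ⋂ (_ : m < n), (D m)ᶜ := by
      ext x
      simp only [Set.mem_preimage, Set.mem_singleton_iff, Set.mem_inter_iff, Set.mem_iInter,
        Set.mem_compl_iff]
      constructor
      · intro hx
        have hne : {m | x ∈ D m}.Nonempty := by
          by_contra hne
          rw [Set.not_nonempty_iff_eq_empty] at hne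
          rw [hne, Nat.sInf_empty] at hx
          exact hn hx.symm
        refine ⟨by rw [← hx]; exact Nat.sInf_mem hne, fun m hm => ?_⟩
        exact Nat.notMem_of_lt_sInf (by omega : m < sInf {m | x ∈ D m})
      · rintro ⟨h1, h2⟩
        have hne : {m | x ∈ D m}.Nonempty := ⟨n, h1⟩
        have hle := Nat.sInf_le (show n ∈ {m | x ∈ D m} from h1)
        rcases lt_or_eq_of_le hle with hlt | heq
        · exact absurd (Nat.sInf_mem hne) (h2 _ hlt)
        · exact heq
    rw [this]
    exact (hD n).inter (MeasurableSet.iInter fun m => MeasurableSet.iInter fun _ => (hD m).compl)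

lemma measurable_eq_fun {q : ℕ → ℕ} (f g : (∀ n, Fin (q n)) → (∀ n, Fin (q n)))
    (hf : Measurable f) (hg : Measurable g) : MeasurableSet {x | f x = g x} := by
  have : {x | f x = g x} = ⋂ i, {x | f x i = g x i} := by
    ext x; simp [funext_iff]
  rw [this]
  exact MeasurableSet.iInter fun i =>
    measurableSet_eq_fun ((measurable_pi_apply i).comp hf)
      ((measurable_pi_apply i).comp hg)

lemma measurable_perm_pow {q : ℕ → ℕ} (R : Equiv.Perm (∀ n, Fin (q n)))
    (hR : Measurable ⇑R) (k : ℕ) : Measurable ⇑(R ^ k) := by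
  rw [Equiv.Perm.coe_pow]
  exact hR.iterate k

lemma measurable_set_eq_zpow {q : ℕ → ℕ} (R : Equiv.Perm (∀ n, Fin (q n)))
    (hR : Measurable ⇑R) (f : (∀ n, Fin (q n)) → (∀ n, Fin (q n))) (hf : Measurable f)
    (c : ℤ) : MeasurableSet {x | f x = (R ^ c) x} := by
  rcases c with k | k
  · rw [Int.ofNat_eq_coe, zpow_natCast]
    exact measurable_eq_fun f _ hf (measurable_perm_pow R hR k)
  · have heq : {x | f x = (R ^ Int.negSucc k) x} = {x | (R ^ (k + 1)) (f x) = x} := by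
      ext x
      rw [Set.mem_setOf_eq, Set.mem_setOf_eq, zpow_negSucc]
      constructor
      · intro hx; rw [hx]; simp
      · intro hx; exact (Equiv.Perm.inv_eq_iff_eq.mpr hx.symm).symm
    rw [heq]
    exact measurable_eq_fun _ _ ((measurable_perm_pow R hR (k+1)).comp hf) measurable_id

lemma sum_split (f : ℕ → ℕ) (i n : ℕ) (hi : i ≤ n) :
    ∑ k ∈ Finset.range (n + 1), f k =
      (∑ k ∈ Finset.range i, f k) + f i + ∑ k ∈ Finset.Ico (i + 1) (n + 1), f k := by
  rw [Finset.range_eq_Ico,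
    ← Finset.sum_Ico_consecutive f (Nat.zero_le i) (by omega : i ≤ n + 1),
    ← Finset.sum_Ico_consecutive f (by omega : i ≤ i + 1) (by omega : i + 1 ≤ n + 1),
    (by ext x; simp only [Finset.mem_Ico, Finset.mem_singleton]; omega : Finset.Ico i (i + 1) = {i}), Finset.sum_singleton,
    ← Finset.range_eq_Ico]
  omega

lemma nat_digit (A B r s H : ℕ) (hH : 0 < H) (hr : r < H) (hs : s < H)
    (heq : r + A * H = s + B * H) : A = B ∧ r = s := by
  have hA : (r + A * H) / H = A := by
    rw [Nat.add_mul_div_right _ _ hH, Nat.div_eq_of_lt hr, zero_add]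
  have hB : (s + B * H) / H = B := by
    rw [Nat.add_mul_div_right _ _ hH, Nat.div_eq_of_lt hs, zero_add]
  have hAB : A = B := by rw [← hA, ← hB, heq]
  constructor
  · exact hAB
  · subst hAB; omega

def valN (q h : ℕ → ℕ) (n : ℕ) (y : ∀ k, Fin (q k)) : ℕ :=
  ∑ k ∈ Finset.range (n + 1), (y k : ℕ) * h k

section Heights

variable (q h : ℕ → ℕ) (hq : ∀ n, 2 ≤ q n) (h0 : h 0 = 1) (hrec : ∀ n, h (n + 1) = q n * h n)

include hq h0 hrec

lemma h_pos : ∀ n, 1 ≤ h n := by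
  intro n
  induction n with
  | zero => omega
  | succ n ih => rw [hrec]; have := hq n; exact le_trans ih (Nat.le_mul_of_pos_left _ (by omega))

lemma h_ge_two_pow : ∀ n, 2 ^ n ≤ h n := by
  intro n
  induction n with
  | zero => simp [h0]
  | succ n ih =>
    rw [hrec, pow_succ, mul_comm ((2:ℕ)^n) 2]
    exact Nat.mul_le_mul (hq n) ih

lemma tele : ∀ m, (∑ k ∈ Finset.range m, (q k - 1) * h k) + 1 = h m := by
  intro m
  induction m with
  | zero => simp [h0]
  | succ m ih =>
    rw [Finset.sum_range_succ, hrec]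
    have h1 : (q m - 1) * h m = q m * h m - 1 * h m := by rw [← Nat.sub_mul]
    have h2 : h m ≤ q m * h m := Nat.le_mul_of_pos_left _ (by have := hq m; omega)
    have := h_pos q h hq h0 hrec m
    omega

lemma valN_lt (x : ∀ k, Fin (q k)) (n : ℕ) :
    (∑ k ∈ Finset.range (n + 1), (x k : ℕ) * h k) < h (n + 1) := by
  have hle : (∑ k ∈ Finset.range (n + 1), (x k : ℕ) * h k)
      ≤ ∑ k ∈ Finset.range (n + 1), (q k - 1) * h k := by
    apply Finset.sum_le_sum
    intro k _
    exact Nat.mul_le_mul_right _ (by have := (x k).is_lt; omega)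
  have := tele q h hq h0 hrec (n + 1)
  omega

lemma valN_inj : ∀ (n : ℕ) (a b : ∀ k, Fin (q k)),
    (∑ k ∈ Finset.range (n + 1), (a k : ℕ) * h k) =
      (∑ k ∈ Finset.range (n + 1), (b k : ℕ) * h k) →
    ∀ k, k < n + 1 → a k = b k := by
  intro n
  induction n with
  | zero =>
    intro a b heq k hk
    interval_cases k
    rw [Finset.sum_range_one, Finset.sum_range_one, h0, mul_one, mul_one] at heq
    exact Fin.ext heq
  | succ n ih =>
    intro a b heq k hk
    rw [Finset.sum_range_succ (fun k => (a k : ℕ) * h k), Finset.sum_range_succ (fun k => (b k : ℕ) * h k)] at heq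
    have hd := nat_digit ((a (n+1) : ℕ)) ((b (n+1) : ℕ)) _ _ (h (n+1))
      (h_pos q h hq h0 hrec (n+1)) (valN_lt q h hq h0 hrec a n) (valN_lt q h hq h0 hrec b n) heq
    rcases Nat.lt_or_ge k (n + 1) with hk' | hk'
    · exact ih a b hd.2 k hk'
    · have : k = n + 1 := by omega
      subst this
      exact Fin.ext hd.1


lemma valN_lt' (x : ∀ k, Fin (q k)) (n : ℕ) : valN q h n x < h (n + 1) :=
  valN_lt q h hq h0 hrec x n

lemma valN_inj' (n : ℕ) (a b : ∀ k, Fin (q k)) (heq : valN q h n a = valN q h n b) :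
    ∀ k, k < n + 1 → a k = b k :=
  valN_inj q h hq h0 hrec n a b heq

end Heights

end OdoAux

/-- The finite distortion `ψ_n`. -/
def psiN (q : ℕ → ℕ) (σ : ∀ n, Fin (q (n + 1)) → Equiv.Perm (Fin (q n))) (n : ℕ)
    (x : ∀ k, Fin (q k)) : ∀ k, Fin (q k) :=
  fun k => if k ≤ n then σ k (x (k + 1)) (x k) else x k

/-- The full distortion `ψ`. -/
def psiInf (q : ℕ → ℕ) (σ : ∀ n, Fin (q (n + 1)) → Equiv.Perm (Fin (q n)))
    (x : ∀ k, Fin (q k)) : ∀ k, Fin (q k) :=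
  fun k => σ k (x (k + 1)) (x k)

/-- The maximal point `x⁺`. -/
def xMax (q : ℕ → ℕ) (hq : ∀ n, 2 ≤ q n) : ∀ n, Fin (q n) :=
  fun n => ⟨q n - 1, by have := hq n; omega⟩

/-- If `∑ φ(h_{n+1})/h_n < ∞` with `φ` non-decreasing, the identity is a
`φ`-integrable orbit equivalence between the odometer `S` and the odomutant `T`. -/
theorem stmt17 (q : ℕ → ℕ) (hq : ∀ n, 2 ≤ q n)
    (μ : Measure (∀ n, Fin (q n))) [IsProbabilityMeasure μ]
    (hμ : ∀ (n : ℕ) (y : ∀ i, Fin (q i)),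
      μ {x | ∀ i < n, x i = y i} = 1 / ∏ i ∈ Finset.range n, (q i : ENNReal))
    (σ : ∀ n, Fin (q (n + 1)) → Equiv.Perm (Fin (q n)))
    (S : Equiv.Perm (∀ n, Fin (q n)))
    (hS : ∀ (x : ∀ n, Fin (q n)) (i : ℕ),
      (∀ j, j < i → (x j : ℕ) = q j - 1) → (x i : ℕ) ≠ q i - 1 →
        (∀ j, j < i → (S x j : ℕ) = 0) ∧ (S x i : ℕ) = (x i : ℕ) + 1 ∧
          ∀ j, i < j → S x j = x j)
    (hS' : ∀ (x : ∀ n, Fin (q n)), (∀ j, (x j : ℕ) = q j - 1) → ∀ j, (S x j : ℕ) = 0)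
    (hSpres : MeasurePreserving (⇑S) μ μ)
    (T : Equiv.Perm (∀ n, Fin (q n)))
    (hTm : Measurable T) (hTm' : Measurable T.symm)
    (hTpres : MeasurePreserving (⇑T) μ μ)
    -- T is the odomutant associated to S and the permutations σ
    (hT : ∀ x, ∀ n, (∃ k ≤ n, psiInf q σ x k ≠ xMax q hq k) →
      psiN q σ n (T x) = S (psiN q σ n x))
    (h : ℕ → ℕ) (h0 : h 0 = 1) (hrec : ∀ n, h (n + 1) = q n * h n)
    (φ : ℝ → ℝ) (hφ0 : ∀ t, 0 ≤ t → 0 ≤ φ t) (hφmono : MonotoneOn φ (Set.Ici (0 : ℝ)))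
    (hsum : Summable (fun n => φ (h (n + 1)) / (h n : ℝ))) :
    ∃ cS cT : (∀ n, Fin (q n)) → ℤ,
      Measurable cS ∧ Measurable cT ∧
      (∀ᵐ x ∂μ, S x = (T ^ cS x) x) ∧ (∀ᵐ x ∂μ, T x = (S ^ cT x) x) ∧
      ∫⁻ x, ENNReal.ofReal (φ |(cS x : ℝ)|) ∂μ < ⊤ ∧
      ∫⁻ x, ENNReal.ofReal (φ |(cT x : ℝ)|) ∂μ < ⊤ := by
  classical
  have hpos := OdoAux.h_pos q h hq h0 hrec
  have htel := OdoAux.tele q h hq h0 hrec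
  -- Step lemma for S on a tail-class
  have stepS : ∀ (n : ℕ) (x₀ z : ∀ k, Fin (q k)), (∀ k, n < k → z k = x₀ k) →
      OdoAux.valN q h n z + 1 < h (n + 1) →
      (∀ k, n < k → S z k = x₀ k) ∧ OdoAux.valN q h n (S z) = OdoAux.valN q h n z + 1 := by
    intro n x₀ z hz hlt
    have hex : ∃ j, j ≤ n ∧ (z j : ℕ) ≠ q j - 1 := by
      by_contra hco
      push_neg at hco
      have hzz : OdoAux.valN q h n z = ∑ k ∈ Finset.range (n + 1), (q k - 1) * h k := by
        unfold OdoAux.valN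
        exact Finset.sum_congr rfl fun k hk => by
          rw [hco k (by simpa [Nat.lt_succ_iff] using hk)]
      have ht := htel (n + 1)
      omega
    have hexj : ∃ j, (z j : ℕ) ≠ q j - 1 := ⟨hex.choose, hex.choose_spec.2⟩
    set i := Nat.find hexj with hidef
    have hspec : (z i : ℕ) ≠ q i - 1 := Nat.find_spec hexj
    have hmin : ∀ j, j < i → (z j : ℕ) = q j - 1 := fun j hj =>
      not_not.mp (Nat.find_min hexj hj)
    have hin : i ≤ n := le_trans (Nat.find_min' hexj hex.choose_spec.2) hex.choose_spec.1
    obtain ⟨hS0, hS1, hS2⟩ := hS z i hmin hspec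
    refine ⟨fun k hk => by rw [hS2 k (by omega), hz k hk], ?_⟩
    have e1 : OdoAux.valN q h n (S z) = (∑ k ∈ Finset.range i, (S z k : ℕ) * h k)
        + (S z i : ℕ) * h i + ∑ k ∈ Finset.Ico (i + 1) (n + 1), (S z k : ℕ) * h k :=
      OdoAux.sum_split (fun k => (S z k : ℕ) * h k) i n hin
    have e2 : OdoAux.valN q h n z = (∑ k ∈ Finset.range i, (z k : ℕ) * h k)
        + (z i : ℕ) * h i + ∑ k ∈ Finset.Ico (i + 1) (n + 1), (z k : ℕ) * h k :=
      OdoAux.sum_split (fun k => (z k : ℕ) * h k) i n hin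
    have z1 : ∑ k ∈ Finset.range i, (S z k : ℕ) * h k = 0 :=
      Finset.sum_eq_zero fun k hk => by rw [hS0 k (Finset.mem_range.mp hk)]; ring
    have z2 : ∑ k ∈ Finset.Ico (i + 1) (n + 1), (S z k : ℕ) * h k
        = ∑ k ∈ Finset.Ico (i + 1) (n + 1), (z k : ℕ) * h k :=
      Finset.sum_congr rfl fun k hk => by
        rw [hS2 k (by have := Finset.mem_Ico.mp hk; omega)]
    have z3 : ∑ k ∈ Finset.range i, (z k : ℕ) * h k
        = ∑ k ∈ Finset.range i, (q k - 1) * h k :=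
      Finset.sum_congr rfl fun k hk => by rw [hmin k (Finset.mem_range.mp hk)]
    have ht := htel i
    rw [e1, e2, z1, z2, z3, hS1]
    have hmul : ((z i : ℕ) + 1) * h i = (z i : ℕ) * h i + h i := by ring
    omega
  -- psiN basic facts
  have hpsiN1 : ∀ (y : ∀ k, Fin (q k)) (n k : ℕ), k ≤ n → psiN q σ n y k = psiInf q σ y k := by
    intro y n k hk; simp [psiN, psiInf, hk]
  have hpsiN2 : ∀ (y : ∀ k, Fin (q k)) (n k : ℕ), n < k → psiN q σ n y k = y k := by
    intro y n k hk; simp [psiN, if_neg (by omega : ¬ k ≤ n)]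
  have hvalpsiN : ∀ (y : ∀ k, Fin (q k)) (n : ℕ),
      OdoAux.valN q h n (psiN q σ n y) = OdoAux.valN q h n (psiInf q σ y) := by
    intro y n
    unfold OdoAux.valN
    exact Finset.sum_congr rfl fun k hk => by
      rw [hpsiN1 y n k (by simpa [Nat.lt_succ_iff] using hk)]
  -- Step lemma for T on a tail-class
  have stepT : ∀ (n : ℕ) (x₀ z : ∀ k, Fin (q k)), (∀ k, n < k → z k = x₀ k) →
      OdoAux.valN q h n (psiInf q σ z) + 1 < h (n + 1) →
      (∀ k, n < k → T z k = x₀ k) ∧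
        OdoAux.valN q h n (psiInf q σ (T z)) = OdoAux.valN q h n (psiInf q σ z) + 1 := by
    intro n x₀ z hz hlt
    have hex : ∃ k, k ≤ n ∧ psiInf q σ z k ≠ xMax q hq k := by
      by_contra hco
      push_neg at hco
      have hzz : OdoAux.valN q h n (psiInf q σ z)
          = ∑ k ∈ Finset.range (n + 1), (q k - 1) * h k := by
        unfold OdoAux.valN
        exact Finset.sum_congr rfl fun k hk => by
          rw [hco k (by simpa [Nat.lt_succ_iff] using hk)]; rfl
      have ht := htel (n + 1)
      omega
    obtain ⟨k0, hk0n, hk0⟩ := hex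
    have hTeq := hT z n ⟨k0, hk0n, hk0⟩
    have hw : ∀ k, n < k → psiN q σ n z k = x₀ k := fun k hk => by
      rw [hpsiN2 z n k hk]; exact hz k hk
    have hstep := stepS n x₀ (psiN q σ n z) hw (by rw [hvalpsiN z n]; exact hlt)
    constructor
    · intro k hk
      have h1 : T z k = psiN q σ n (T z) k := (hpsiN2 (T z) n k hk).symm
      rw [h1, hTeq]
      exact hstep.1 k hk
    · rw [← hvalpsiN (T z) n, hTeq, hstep.2, hvalpsiN z n]
  -- digit bound helper
  have hdig : ∀ (d : ∀ k, Fin (q k)) (n : ℕ), (d n : ℕ) ≠ q n - 1 →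
      OdoAux.valN q h n d + 1 < h (n + 1) := by
    intro d n hd
    have e := Finset.sum_range_succ (fun k => (d k : ℕ) * h k) n
    have hdn : (d n : ℕ) + 1 ≤ q n - 1 := by
      have h2 := (d n).is_lt
      have := hq n
      omega
    have hs : ∑ k ∈ Finset.range n, (d k : ℕ) * h k
        ≤ ∑ k ∈ Finset.range n, (q k - 1) * h k :=
      Finset.sum_le_sum fun k _ => Nat.mul_le_mul_right _ (by have := (d k).is_lt; omega)
    have ht := htel n
    have ht2 : h (n + 1) = q n * h n := hrec n
    have hp := hpos n
    unfold OdoAux.valN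
    rw [e]
    have hmul : ((d n : ℕ) + 1) * h n ≤ (q n - 1) * h n := Nat.mul_le_mul_right _ hdn
    have hmul2 : (q n - 1) * h n = q n * h n - 1 * h n := by rw [← Nat.sub_mul]
    have hexp : ((d n : ℕ) + 1) * h n = (d n : ℕ) * h n + h n := by ring
    omega
  -- existence of cocycle for T
  have hECT : ∀ (x : ∀ k, Fin (q k)) (n : ℕ), psiInf q σ x n ≠ xMax q hq n →
      ∃ c : ℤ, T x = (S ^ c) x ∧ c.natAbs ≤ h (n + 1) := by
    intro x n hx
    have hb : OdoAux.valN q h n (psiInf q σ x) + 1 < h (n + 1) :=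
      hdig (psiInf q σ x) n (fun hcon => hx (Fin.ext hcon))
    have hTx := stepT n x x (fun k _ => rfl) hb
    have hcyc := OdoAux.cycle_lemma S {y | ∀ k, n < k → y k = x k}
      (fun y => OdoAux.valN q h n y) (h (n + 1))
      (fun a ha b hb' hab => by
        funext k
        by_cases hk : k ≤ n
        · exact OdoAux.valN_inj' q h hq h0 hrec n a b hab k (by omega)
        · rw [ha k (by omega), hb' k (by omega)])
      (fun z hz hlt' => stepS n x z hz hlt')
      (fun z _ => OdoAux.valN_lt' q h hq h0 hrec z n)
      x (fun k _ => rfl) (T x) hTx.1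
    refine ⟨_, hcyc.symm, ?_⟩
    show ((OdoAux.valN q h n (T x) : ℤ) - (OdoAux.valN q h n x : ℤ)).natAbs ≤ h (n + 1)
    have b1 := OdoAux.valN_lt' q h hq h0 hrec (T x) n
    have b2 := OdoAux.valN_lt' q h hq h0 hrec x n
    omega
  -- existence of cocycle for S
  have hECS : ∀ (x : ∀ k, Fin (q k)) (n : ℕ), x n ≠ xMax q hq n →
      ∃ c : ℤ, S x = (T ^ c) x ∧ c.natAbs ≤ h (n + 1) := by
    intro x n hx
    have hb : OdoAux.valN q h n x + 1 < h (n + 1) :=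
      hdig x n (fun hcon => hx (Fin.ext hcon))
    have hSx := stepS n x x (fun k _ => rfl) hb
    have hcyc := OdoAux.cycle_lemma T {y | ∀ k, n < k → y k = x k}
      (fun y => OdoAux.valN q h n (psiInf q σ y)) (h (n + 1))
      (fun a ha b hb' hab => by
        have hψ : ∀ k, k < n + 1 → psiInf q σ a k = psiInf q σ b k :=
          OdoAux.valN_inj' q h hq h0 hrec n (psiInf q σ a) (psiInf q σ b) hab
        have key := OdoAux.downward_induction (n + 1) (fun k => a k = b k)
          (fun k hk => by show a k = b k; rw [ha k (by omega), hb' k (by omega)])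
          (fun k hk ih => by
            show a k = b k
            have ih' : a (k + 1) = b (k + 1) := ih
            have h1 := hψ k (by omega)
            simp only [psiInf] at h1
            rw [ih'] at h1
            exact (σ k (b (k + 1))).injective h1)
        funext k
        exact key k)
      (fun z hz hlt' => stepT n x z hz hlt')
      (fun z _ => OdoAux.valN_lt' q h hq h0 hrec (psiInf q σ z) n)
      x (fun k _ => rfl) (S x) hSx.1
    refine ⟨_, hcyc.symm, ?_⟩
    show ((OdoAux.valN q h n (psiInf q σ (S x)) : ℤ)
      - (OdoAux.valN q h n (psiInf q σ x) : ℤ)).natAbs ≤ h (n + 1)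
    have b1 := OdoAux.valN_lt' q h hq h0 hrec (psiInf q σ (S x)) n
    have b2 := OdoAux.valN_lt' q h hq h0 hrec (psiInf q σ x) n
    omega
    -- product formula
  have hprod : ∀ n, ∏ i ∈ Finset.range n, (q i : ENNReal) = (h n : ENNReal) := by
    intro n
    induction n with
    | zero => simp [h0]
    | succ n ih => rw [Finset.prod_range_succ, ih, hrec]; push_cast; ring
  have hcyl : ∀ (n : ℕ) (w : ∀ i, Fin (q i)),
      μ {x | ∀ i < n, x i = w i} = ((h n : ENNReal))⁻¹ := by
    intro n w
    rw [hμ n w, hprod n, one_div]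
  -- measure bound for "determined" sets
  have hmeasle : ∀ (n : ℕ) (E : Set (∀ k, Fin (q k))),
      (∀ x ∈ E, ∀ y ∈ E, x n = y n → ∀ i, i < n + 1 → x i = y i) →
      μ E ≤ ((h n : ENNReal))⁻¹ := by
    intro n E hE
    have hcover : E ⊆ ⋃ z : Fin (q n), E ∩ {x | x n = z} := fun x hx =>
      Set.mem_iUnion.mpr ⟨x n, hx, rfl⟩
    have hqn0 : ((q n : ℕ) : ENNReal) ≠ 0 := Nat.cast_ne_zero.mpr (by have := hq n; omega)
    have hqnt : ((q n : ℕ) : ENNReal) ≠ ⊤ := ENNReal.natCast_ne_top _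
    calc μ E ≤ μ (⋃ z : Fin (q n), E ∩ {x | x n = z}) := measure_mono hcover
      _ ≤ ∑' z : Fin (q n), μ (E ∩ {x | x n = z}) := measure_iUnion_le _
      _ ≤ ∑' _ : Fin (q n), ((h (n + 1) : ℕ) : ENNReal)⁻¹ := by
          refine ENNReal.tsum_le_tsum fun z => ?_
          by_cases hne : (E ∩ {x | x n = z}).Nonempty
          · obtain ⟨w, hwE, hwz⟩ := hne
            have hsub : E ∩ {x | x n = z} ⊆ {x | ∀ i < n + 1, x i = w i} := by
              rintro x ⟨hxE, hxz⟩ i hi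
              exact hE x hxE w hwE (by rw [hxz]; exact hwz.symm) i hi
            exact le_trans (measure_mono hsub) (le_of_eq (hcyl (n + 1) w))
          · rw [Set.not_nonempty_iff_eq_empty.mp hne]
            simp
      _ = ((q n : ℕ) : ENNReal) * ((h (n + 1) : ℕ) : ENNReal)⁻¹ := by
          rw [tsum_fintype]
          simp [Finset.sum_const, Finset.card_univ, nsmul_eq_mul]
      _ = ((h n : ℕ) : ENNReal)⁻¹ := by
          have hh : ((h (n + 1) : ℕ) : ENNReal) = ((q n : ℕ) : ENNReal) * ((h n : ℕ) : ENNReal) := by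
            rw [hrec]; push_cast; ring
          rw [hh, ENNReal.mul_inv (Or.inl hqn0) (Or.inl hqnt), ← mul_assoc,
            ENNReal.mul_inv_cancel hqn0 hqnt, one_mul]
  -- null sets
  have hnull : ∀ s : Set (∀ k, Fin (q k)), (∀ n, μ s ≤ ((h n : ENNReal))⁻¹) → μ s = 0 := by
    intro s hs
    by_contra hne
    obtain ⟨n, hn⟩ := ENNReal.exists_inv_two_pow_lt hne
    have h1 : μ s ≤ (((2 ^ n : ℕ) : ENNReal))⁻¹ := by
      refine le_trans (hs n) (ENNReal.inv_le_inv.mpr ?_)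
      exact_mod_cast OdoAux.h_ge_two_pow q h hq h0 hrec n
    rw [show ((2 ^ n : ℕ) : ENNReal) = (2 : ENNReal) ^ n by push_cast; ring,
      ENNReal.inv_pow] at h1
    exact absurd (lt_of_lt_of_le hn h1) (lt_irrefl _)
  -- agreement on levels for psi-cylinders
  have hAagree : ∀ (n : ℕ) (x y : ∀ k, Fin (q k)),
      (∀ k < n, psiInf q σ x k = xMax q hq k) → (∀ k < n, psiInf q σ y k = xMax q hq k) →
      x n = y n → ∀ i, i < n + 1 → x i = y i := by
    intro n x y hx hy hxy
    have key := OdoAux.downward_induction n (fun i => i ≤ n → x i = y i)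
      (fun k hk => by
        show k ≤ n → x k = y k
        intro hk'
        have : k = n := by omega
        subst this; exact hxy)
      (fun k hk ih => by
        show k ≤ n → x k = y k
        intro _
        have ih' : x (k + 1) = y (k + 1) := ih (by omega)
        have h1 : psiInf q σ x k = psiInf q σ y k := by rw [hx k hk, hy k hk]
        simp only [psiInf] at h1
        rw [ih'] at h1
        exact (σ k (y (k + 1))).injective h1)
    intro i hi
    exact key i (by omega)
  -- measurability of psi coordinates
  have hψm : ∀ k : ℕ, Measurable fun x : ∀ n, Fin (q n) => psiInf q σ x k := by
    intro k
    have h1 : Measurable fun x : ∀ n, Fin (q n) => (x (k + 1), x k) :=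
      (measurable_pi_apply (k + 1)).prodMk (measurable_pi_apply k)
    exact (measurable_of_countable fun p : Fin (q (k + 1)) × Fin (q k) => σ k p.1 p.2).comp h1
  -- the level sets
  have hGTm : ∀ n : ℕ, MeasurableSet {x : ∀ k, Fin (q k) |
      (∀ k < n, psiInf q σ x k = xMax q hq k) ∧ psiInf q σ x n ≠ xMax q hq n} := by
    intro n
    have e : {x : ∀ k, Fin (q k) |
        (∀ k < n, psiInf q σ x k = xMax q hq k) ∧ psiInf q σ x n ≠ xMax q hq n}
        = (⋂ k, ⋂ (_ : k < n), {x | psiInf q σ x k = xMax q hq k})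
          ∩ {x | psiInf q σ x n = xMax q hq n}ᶜ := by
      ext x
      simp [Set.mem_iInter]
    rw [e]
    refine MeasurableSet.inter ?_ ?_
    · exact MeasurableSet.iInter fun k => MeasurableSet.iInter fun _ =>
        (hψm k) (measurableSet_singleton _)
    · exact ((hψm n) (measurableSet_singleton _)).compl
  have hGSm : ∀ n : ℕ, MeasurableSet {x : ∀ k, Fin (q k) |
      (∀ k < n, x k = xMax q hq k) ∧ x n ≠ xMax q hq n} := by
    intro n
    have e : {x : ∀ k, Fin (q k) | (∀ k < n, x k = xMax q hq k) ∧ x n ≠ xMax q hq n}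
        = (⋂ k, ⋂ (_ : k < n), {x | x k = xMax q hq k}) ∩ {x | x n = xMax q hq n}ᶜ := by
      ext x
      simp [Set.mem_iInter]
    rw [e]
    refine MeasurableSet.inter ?_ ?_
    · exact MeasurableSet.iInter fun k => MeasurableSet.iInter fun _ =>
        (measurable_pi_apply k) (measurableSet_singleton _)
    · exact ((measurable_pi_apply n) (measurableSet_singleton _)).compl
  -- measure bounds for level sets
  have hGTle : ∀ n : ℕ, μ {x : ∀ k, Fin (q k) |
      (∀ k < n, psiInf q σ x k = xMax q hq k) ∧ psiInf q σ x n ≠ xMax q hq n}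
      ≤ ((h n : ENNReal))⁻¹ := by
    intro n
    refine hmeasle n _ ?_
    rintro x ⟨hx, -⟩ y ⟨hy, -⟩ hxy
    exact hAagree n x y hx hy hxy
  have hGSle : ∀ n : ℕ, μ {x : ∀ k, Fin (q k) |
      (∀ k < n, x k = xMax q hq k) ∧ x n ≠ xMax q hq n} ≤ ((h n : ENNReal))⁻¹ := by
    intro n
    refine hmeasle n _ ?_
    rintro x ⟨hx, -⟩ y ⟨hy, -⟩ hxy i hi
    rcases Nat.lt_or_ge i n with hin | hin
    · rw [hx i hin, hy i hin]
    · have : i = n := by omega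
      subst this; exact hxy
  -- a.e. coverings
  have hcovT : ∀ᵐ x ∂μ, ∃ n, x ∈ {x : ∀ k, Fin (q k) |
      (∀ k < n, psiInf q σ x k = xMax q hq k) ∧ psiInf q σ x n ≠ xMax q hq n} := by
    have hae : ∀ᵐ x ∂μ, ∃ n, psiInf q σ x n ≠ xMax q hq n := by
      rw [ae_iff]
      push_neg
      refine hnull _ fun n => ?_
      refine le_trans (measure_mono ?_) (hmeasle n {x | ∀ k < n, psiInf q σ x k = xMax q hq k}
        (fun x hx y hy hxy => hAagree n x y hx hy hxy))
      intro x hx k _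
      exact hx k
    refine hae.mono fun x hx => ?_
    exact ⟨Nat.find hx, fun k hk => not_not.mp (Nat.find_min hx hk), Nat.find_spec hx⟩
  have hcovS : ∀ᵐ x ∂μ, ∃ n, x ∈ {x : ∀ k, Fin (q k) |
      (∀ k < n, x k = xMax q hq k) ∧ x n ≠ xMax q hq n} := by
    have hae : ∀ᵐ x ∂μ, ∃ n, x n ≠ xMax q hq n := by
      rw [ae_iff]
      push_neg
      refine hnull _ fun n => ?_
      refine le_trans (measure_mono ?_) (hmeasle n {x | ∀ k < n, x k = xMax q hq k} ?_)
      · intro x hx k _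
        exact hx k
      · rintro x hx y hy hxy i hi
        rcases Nat.lt_or_ge i n with hin | hin
        · rw [hx i hin, hy i hin]
        · have : i = n := by omega
          subst this; exact hxy
    refine hae.mono fun x hx => ?_
    exact ⟨Nat.find hx, fun k hk => not_not.mp (Nat.find_min hx hk), Nat.find_spec hx⟩
  -- the key integral bound
  have hkey : ∀ (c : (∀ k, Fin (q k)) → ℤ) (G : ℕ → Set (∀ k, Fin (q k))),
      (∀ n, MeasurableSet (G n)) → (∀ n, μ (G n) ≤ ((h n : ENNReal))⁻¹) →
      (∀ n x, x ∈ G n → (c x).natAbs ≤ h (n + 1)) → (∀ᵐ x ∂μ, ∃ n, x ∈ G n) →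
      ∫⁻ x, ENNReal.ofReal (φ |(c x : ℝ)|) ∂μ < ⊤ := by
    intro c G hGm hGle hGb hGcov
    have hle : ∀ᵐ x ∂μ, ENNReal.ofReal (φ |(c x : ℝ)|)
        ≤ ∑' n, Set.indicator (G n) (fun _ => ENNReal.ofReal (φ (h (n + 1)))) x := by
      refine hGcov.mono fun x hx => ?_
      obtain ⟨n, hxn⟩ := hx
      have habs : |(c x : ℝ)| ≤ ((h (n + 1) : ℕ) : ℝ) := by
        have h1 : ((c x).natAbs : ℝ) ≤ ((h (n + 1) : ℕ) : ℝ) :=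
          Nat.cast_le.mpr (hGb n x hxn)
        rwa [Nat.cast_natAbs, Int.cast_abs] at h1
      calc ENNReal.ofReal (φ |(c x : ℝ)|) ≤ ENNReal.ofReal (φ ((h (n + 1) : ℕ) : ℝ)) :=
            ENNReal.ofReal_le_ofReal
              (hφmono (Set.mem_Ici.mpr (abs_nonneg _))
                (Set.mem_Ici.mpr (Nat.cast_nonneg _)) habs)
        _ = Set.indicator (G n) (fun _ => ENNReal.ofReal (φ (h (n + 1)))) x :=
            (Set.indicator_of_mem hxn (fun _ => ENNReal.ofReal (φ (h (n + 1))))).symm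
        _ ≤ ∑' m, Set.indicator (G m) (fun _ => ENNReal.ofReal (φ (h (m + 1)))) x :=
            ENNReal.le_tsum n
    calc ∫⁻ x, ENNReal.ofReal (φ |(c x : ℝ)|) ∂μ
        ≤ ∫⁻ x, ∑' n, Set.indicator (G n) (fun _ => ENNReal.ofReal (φ (h (n + 1)))) x ∂μ :=
          lintegral_mono_ae hle
      _ = ∑' n, ∫⁻ x, Set.indicator (G n) (fun _ => ENNReal.ofReal (φ (h (n + 1)))) x ∂μ :=
          lintegral_tsum fun n => (measurable_const.indicator (hGm n)).aemeasurable
      _ = ∑' n, ENNReal.ofReal (φ (h (n + 1))) * μ (G n) := by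
          refine tsum_congr fun n => ?_
          rw [lintegral_indicator (hGm n), MeasureTheory.lintegral_const,
            Measure.restrict_apply_univ]
      _ ≤ ∑' n, ENNReal.ofReal (φ (h (n + 1))) * ((h n : ENNReal))⁻¹ :=
          ENNReal.tsum_le_tsum fun n => mul_le_mul_right (hGle n) _
      _ = ∑' n, ENNReal.ofReal (φ (h (n + 1)) / (h n : ℝ)) := by
          refine tsum_congr fun n => ?_
          have hpn : (0 : ℝ) < ((h n : ℕ) : ℝ) := by
            have := hpos n
            positivity
          rw [div_eq_mul_inv, ENNReal.ofReal_mul (hφ0 _ (Nat.cast_nonneg _)),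
            ENNReal.ofReal_inv_of_pos hpn, ENNReal.ofReal_natCast]
      _ = ENNReal.ofReal (∑' n, φ (h (n + 1)) / (h n : ℝ)) := by
          refine (ENNReal.ofReal_tsum_of_nonneg (fun n => ?_) hsum).symm
          have := hpos n
          exact div_nonneg (hφ0 _ (Nat.cast_nonneg _)) (Nat.cast_nonneg _)
      _ < ⊤ := ENNReal.ofReal_lt_top
  -- assemble
  refine ⟨fun x => OdoAux.enumZ (sInf {m | S x = (T ^ OdoAux.enumZ m) x}),
    fun x => OdoAux.enumZ (sInf {m | T x = (S ^ OdoAux.enumZ m) x}), ?_, ?_, ?_, ?_, ?_, ?_⟩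
  · have h1 : Measurable fun x : ∀ n, Fin (q n) => sInf {m | S x = (T ^ OdoAux.enumZ m) x} :=
      OdoAux.measurable_sInf_mem (fun m => {x | S x = (T ^ OdoAux.enumZ m) x})
        (fun m => OdoAux.measurable_set_eq_zpow T hTm (⇑S) hSpres.measurable (OdoAux.enumZ m))
    exact (measurable_from_top (f := OdoAux.enumZ)).comp h1
  · have h1 : Measurable fun x : ∀ n, Fin (q n) => sInf {m | T x = (S ^ OdoAux.enumZ m) x} :=
      OdoAux.measurable_sInf_mem (fun m => {x | T x = (S ^ OdoAux.enumZ m) x})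
        (fun m => OdoAux.measurable_set_eq_zpow S hSpres.measurable (⇑T) hTm (OdoAux.enumZ m))
    exact (measurable_from_top (f := OdoAux.enumZ)).comp h1
  · refine hcovS.mono fun x hx => ?_
    obtain ⟨n, _, hn⟩ := hx
    exact (OdoAux.exists_min_pow T x (S x) (h (n + 1)) (hECS x n hn)).1
  · refine hcovT.mono fun x hx => ?_
    obtain ⟨n, _, hn⟩ := hx
    exact (OdoAux.exists_min_pow S x (T x) (h (n + 1)) (hECT x n hn)).1
  · refine hkey _ _ hGSm hGSle ?_ hcovS
    intro n x hx
    exact (OdoAux.exists_min_pow T x (S x) (h (n + 1)) (hECS x n hx.2)).2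
  · refine hkey _ _ hGTm hGTle ?_ hcovT
    intro n x hx
    exact (OdoAux.exists_min_pow S x (T x) (h (n + 1)) (hECT x n hx.2)).2

end
end

section
/- Let T be an odomutant built with uniformly c-multiple permutations τ^{(n)}_j fixing 0, with parameters c = (c_n, q̃_n)_{n≥0} and q_n = c_n q̃_n. Then for every ℓ ≥ 1, every n ≥ ℓ − 1, and every x_{n+1} ∈ {0,…,q_{n+1}−1}, the h_{n+1}-word of any point of the cylinder [0,…,0,x_{n+1}]_{n+2} with respect to the partition P̃(ℓ) is the concatenation W^{(n)}_0 · W^{(n)}_{(σ^{(n)}_{x_{n+1}})^{-1}(1)} · ⋯ · W^{(n)}_{(σ^{(n)}_{x_{n+1}})^{-1}(q_n−1)}, where W^{(n)}_i denotes the common h_n-word of all points of [0,…,0,i]_{n+1}. -/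
noncomputable section

/-- The coding map of the partition `P̃(ℓ)`: the first `ℓ−1` coordinates,
together with the index `x_{ℓ-1} / c_{ℓ-1}` of the block `I_j^{(ℓ-1)}`
containing the last one. -/
def codeT (q : ℕ → ℕ) (c : ℕ → ℕ) (ℓ : ℕ) (x : ∀ n, Fin (q n)) : Fin ℓ → ℕ :=
  fun i => if (i : ℕ) + 1 < ℓ then (x (i : ℕ) : ℕ) else (x (i : ℕ) : ℕ) / c (ℓ - 1)

section OdoAux

variable (q h : ℕ → ℕ)

lemma odo_hPos (hq : ∀ n, 2 ≤ q n) (h0 : h 0 = 1) (hrec : ∀ n, h (n + 1) = q n * h n) :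
    ∀ n, 0 < h n := by
  intro n
  induction n with
  | zero => omega
  | succ n ih => rw [hrec]; exact Nat.mul_pos (by have := hq n; omega) ih

lemma odo_hDvd (hrec : ∀ n, h (n + 1) = q n * h n) :
    ∀ k m, k ≤ m → h k ∣ h m := by
  intro k m hkm
  induction m, hkm using Nat.le_induction with
  | base => exact dvd_rfl
  | succ m _ ih => rw [hrec]; exact ih.mul_left (q m)

lemma odo_allMaxMod (hq : ∀ n, 2 ≤ q n) (h0 : h 0 = 1)
    (hrec : ∀ n, h (n + 1) = q n * h n) (j : ℕ) :
    ∀ i, (∀ k, k < i → j / h k % q k = q k - 1) → j % h i = h i - 1 := by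
  intro i
  induction i with
  | zero => intro _; simp [h0, Nat.mod_one]
  | succ i ih =>
    intro hmax
    have hhi := odo_hPos q h hq h0 hrec i
    have hq2 := hq i
    have h1 : j % h i = h i - 1 := ih (fun k hk => hmax k (by omega))
    have h2 : j / h i % q i = q i - 1 := hmax i (by omega)
    have e1 : j % (h i * q i) / h i = j / h i % q i :=
      Nat.mod_mul_right_div_self j (h i) (q i)
    have e2 : j % (h i * q i) % h i = j % h i := Nat.mod_mod_of_dvd j ⟨q i, rfl⟩
    have e3 : h i * (j % (h i * q i) / h i) + j % (h i * q i) % h i = j % (h i * q i) :=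
      Nat.div_add_mod _ (h i)
    rw [e1, e2, h1, h2] at e3
    have hsplit : h i * q i = h i * (q i - 1) + h i := by
      conv_lhs => rw [show q i = (q i - 1) + 1 by omega]
      rw [Nat.mul_add, Nat.mul_one]
    have : j % (h i * q i) = h i * (q i - 1) + (h i - 1) := e3.symm
    rw [hrec i, Nat.mul_comm (q i) (h i)]
    omega

lemma odo_notAllMax (hq : ∀ n, 2 ≤ q n) (h0 : h 0 = 1)
    (hrec : ∀ n, h (n + 1) = q n * h n) (j n : ℕ) (hj : j + 1 < h (n + 1)) :
    ∃ k, k ≤ n ∧ j / h k % q k ≠ q k - 1 := by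
  by_contra hcon
  push_neg at hcon
  have hall : ∀ k, k < n + 1 → j / h k % q k = q k - 1 := fun k hk => hcon k (by omega)
  have := odo_allMaxMod q h hq h0 hrec j (n + 1) hall
  have hjlt : j < h (n + 1) := by omega
  rw [Nat.mod_eq_of_lt hjlt] at this
  have := odo_hPos q h hq h0 hrec (n + 1)
  omega

lemma odo_carry (hq : ∀ n, 2 ≤ q n) (h0 : h 0 = 1)
    (hrec : ∀ n, h (n + 1) = q n * h n) (j i : ℕ)
    (hmax : ∀ k, k < i → j / h k % q k = q k - 1)
    (hi : j / h i % q i ≠ q i - 1) :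
    (∀ k, k < i → (j + 1) / h k % q k = 0) ∧
    (j + 1) / h i % q i = j / h i % q i + 1 ∧
    (∀ k, i < k → (j + 1) / h k % q k = j / h k % q k) := by
  have hhi := odo_hPos q h hq h0 hrec i
  have hqi := hq i
  have hmod : j % h i = h i - 1 := odo_allMaxMod q h hq h0 hrec j i hmax
  have hdm := Nat.div_add_mod j (h i)
  have hkey : j + 1 = h i * (j / h i + 1) := by rw [Nat.mul_add, Nat.mul_one]; omega
  have hdlt : j / h i % q i < q i := Nat.mod_lt _ (by omega)
  have hdlt' : j / h i % q i < q i - 1 := by omega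
  have hb : (j + 1) / h i % q i = j / h i % q i + 1 := by
    rw [hkey, Nat.mul_div_cancel_left _ hhi]
    rw [Nat.add_mod, Nat.mod_eq_of_lt (show 1 < q i by omega)]
    exact Nat.mod_eq_of_lt (by omega)
  refine ⟨?_, hb, ?_⟩
  · intro k hk
    have hd : h (k + 1) ∣ j + 1 := dvd_trans (odo_hDvd q h hrec (k + 1) i hk)
      ⟨j / h i + 1, hkey⟩
    obtain ⟨t, ht⟩ := hd
    rw [hrec k] at ht
    have hhk := odo_hPos q h hq h0 hrec k
    have : j + 1 = h k * (q k * t) := by rw [ht]; ring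
    rw [this, Nat.mul_div_cancel_left _ hhk, Nat.mul_mod_right]
  · intro k hk
    have hnd : ¬ h k ∣ j + 1 := by
      intro hd
      have hd2 : h (i + 1) ∣ j + 1 := dvd_trans (odo_hDvd q h hrec (i + 1) k hk) hd
      rw [hrec i, hkey, Nat.mul_comm (q i) (h i)] at hd2
      have hqd : q i ∣ j / h i + 1 :=
        (mul_dvd_mul_iff_left (show (h i : ℕ) ≠ 0 by omega)).mp hd2
      obtain ⟨s, hs⟩ := hqd
      have hz : (j / h i + 1) % q i = 0 := by rw [hs, Nat.mul_mod_right]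
      have hmod2 : (j / h i + 1) % q i = j / h i % q i + 1 := by
        rw [Nat.add_mod, Nat.mod_eq_of_lt (show 1 < q i by omega)]
        exact Nat.mod_eq_of_lt (by omega)
      omega
    rw [Nat.succ_div, if_neg hnd, Nat.add_zero]

end OdoAux


section OdoMain

variable (q h : ℕ → ℕ)

lemma odo_digitSplit (hq : ∀ n, 2 ≤ q n) (h0 : h 0 = 1)
    (hrec : ∀ n, h (n + 1) = q n * h n) (a b n k : ℕ) (hk : k < n) (hb : b < h n) :
    (a * h n + b) / h k % q k = b / h k % q k := by
  have hhk := odo_hPos q h hq h0 hrec k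
  obtain ⟨t, ht⟩ := odo_hDvd q h hrec (k + 1) n hk
  rw [hrec k] at ht
  have e : a * h n + b = h k * (a * (q k * t)) + b := by rw [ht]; ring
  rw [e, Nat.mul_add_div hhk]
  have : a * (q k * t) = q k * (a * t) := by ring
  rw [this, Nat.mul_add_mod]

lemma odo_digitTop (hq : ∀ n, 2 ≤ q n) (h0 : h 0 = 1)
    (hrec : ∀ n, h (n + 1) = q n * h n) (a b n : ℕ) (ha : a < q n) (hb : b < h n) :
    (a * h n + b) / h n % q n = a := by
  have hhn := odo_hPos q h hq h0 hrec n
  rw [Nat.mul_comm a (h n), Nat.mul_add_div hhn, Nat.div_eq_of_lt hb, Nat.add_zero]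
  exact Nat.mod_eq_of_lt ha

lemma odo_main (hq : ∀ n, 2 ≤ q n)
    (σ : ∀ n, Fin (q (n + 1)) → Equiv.Perm (Fin (q n)))
    (S : Equiv.Perm (∀ n, Fin (q n)))
    (hS : ∀ (x : ∀ n, Fin (q n)) (i : ℕ),
      (∀ j, j < i → (x j : ℕ) = q j - 1) → (x i : ℕ) ≠ q i - 1 →
        (∀ j, j < i → (S x j : ℕ) = 0) ∧ (S x i : ℕ) = (x i : ℕ) + 1 ∧
          ∀ j, i < j → S x j = x j)
    (T : Equiv.Perm (∀ n, Fin (q n)))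
    (hT : ∀ x, ∀ n, (∃ k ≤ n, psiInf q σ x k ≠ xMax q hq k) →
      psiN q σ n (T x) = S (psiN q σ n x))
    (h0 : h 0 = 1) (hrec : ∀ n, h (n + 1) = q n * h n)
    (n : ℕ) (x : ∀ k, Fin (q k)) (hx : ∀ k, k ≤ n → (psiInf q σ x k : ℕ) = 0) :
    ∀ j, j < h (n + 1) →
      (∀ r, n < r → (⇑T)^[j] x r = x r) ∧
      (∀ k, k ≤ n → (psiInf q σ ((⇑T)^[j] x) k : ℕ) = j / h k % q k) := by
  classical
  intro j
  induction j with
  | zero =>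
    intro _
    refine ⟨fun r _ => rfl, fun k hk => ?_⟩
    simpa using hx k hk
  | succ j ih =>
    intro hj1
    obtain ⟨hfix, hdig⟩ := ih (by omega)
    set z := (⇑T)^[j] x with hz
    obtain ⟨i1, hi1n, hi1ne⟩ := odo_notAllMax q h hq h0 hrec j n hj1
    have hPex : ∃ k, j / h k % q k ≠ q k - 1 := ⟨i1, hi1ne⟩
    set i0 := Nat.find hPex with hi0def
    have hi0P : j / h i0 % q i0 ≠ q i0 - 1 := Nat.find_spec hPex
    have hi0n : i0 ≤ n := le_trans (Nat.find_min' hPex hi1ne) hi1n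
    have hmax : ∀ k, k < i0 → j / h k % q k = q k - 1 := by
      intro k hk
      have := Nat.find_min hPex hk
      simpa using this
    obtain ⟨hc0, hci, hcgt⟩ := odo_carry q h hq h0 hrec j i0 hmax hi0P
    have hpsiN_le : ∀ (w : ∀ r, Fin (q r)) k, k ≤ n → psiN q σ n w k = psiInf q σ w k := by
      intro w k hk; simp [psiN, psiInf, hk]
    have hpsiN_gt : ∀ (w : ∀ r, Fin (q r)) k, n < k → psiN q σ n w k = w k := by
      intro w k hk; simp [psiN, Nat.not_le.mpr hk]
    have hmem : ∃ k ≤ n, psiInf q σ z k ≠ xMax q hq k := by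
      refine ⟨i0, hi0n, fun heq => hi0P ?_⟩
      have hv : (psiInf q σ z i0 : ℕ) = (xMax q hq i0 : ℕ) := congrArg Fin.val heq
      rw [hdig i0 hi0n] at hv
      simpa [xMax] using hv
    have hTz := hT z n hmem
    have hyp1 : ∀ k, k < i0 → (psiN q σ n z k : ℕ) = q k - 1 := by
      intro k hk
      rw [hpsiN_le z k (by omega), hdig k (by omega)]
      exact hmax k hk
    have hyp2 : (psiN q σ n z i0 : ℕ) ≠ q i0 - 1 := by
      rw [hpsiN_le z i0 hi0n, hdig i0 hi0n]
      exact hi0P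
    obtain ⟨hS0, hSi, hSgt⟩ := hS (psiN q σ n z) i0 hyp1 hyp2
    have hstep : (⇑T)^[j + 1] x = T z := by
      rw [Function.iterate_succ_apply', ← hz]
    constructor
    · intro r hr
      rw [hstep]
      have e1 : T z r = psiN q σ n (T z) r := (hpsiN_gt (T z) r hr).symm
      rw [e1, hTz, hSgt r (lt_of_le_of_lt hi0n hr), hpsiN_gt z r hr]
      exact hfix r hr
    · intro k hk
      rw [hstep]
      have e1 : psiInf q σ (T z) k = psiN q σ n (T z) k := (hpsiN_le (T z) k hk).symm
      rw [e1, hTz]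
      rcases lt_trichotomy k i0 with hlt | heq | hgt
      · rw [hc0 k hlt]
        exact hS0 k hlt
      · rw [heq, hci, hSi, hpsiN_le z i0 hi0n, hdig i0 hi0n]
      · rw [hcgt k hgt, hSgt k hgt, hpsiN_le z k hk]
        exact hdig k hk

end OdoMain



section OdoFinal

variable (q h : ℕ → ℕ)

lemma odo_coordsEq (σ : ∀ n, Fin (q (n + 1)) → Equiv.Perm (Fin (q n)))
    (n : ℕ) (x y : ∀ k, Fin (q k))
    (hψ : ∀ k, k < n → psiInf q σ x k = psiInf q σ y k)
    (htop : x n = y n) : ∀ k, k ≤ n → x k = y k := by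
  have key : ∀ d, d ≤ n → x (n - d) = y (n - d) := by
    intro d
    induction d with
    | zero => intro _; simpa using htop
    | succ d ih =>
      intro hd
      have hprev := ih (by omega)
      have hk : n - (d + 1) < n := by omega
      have hk1 : n - (d + 1) + 1 = n - d := by omega
      rw [← hk1] at hprev
      have h1 := hψ (n - (d + 1)) hk
      simp only [psiInf] at h1
      rw [hprev] at h1
      exact (σ (n - (d + 1)) (y (n - (d + 1) + 1))).injective h1
  intro k hk
  have := key (n - k) (by omega)
  rwa [Nat.sub_sub_self hk] at this

lemma odo_main' (hq : ∀ n, 2 ≤ q n)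
    (σ : ∀ n, Fin (q (n + 1)) → Equiv.Perm (Fin (q n)))
    (S : Equiv.Perm (∀ n, Fin (q n)))
    (hS : ∀ (x : ∀ n, Fin (q n)) (i : ℕ),
      (∀ j, j < i → (x j : ℕ) = q j - 1) → (x i : ℕ) ≠ q i - 1 →
        (∀ j, j < i → (S x j : ℕ) = 0) ∧ (S x i : ℕ) = (x i : ℕ) + 1 ∧
          ∀ j, i < j → S x j = x j)
    (T : Equiv.Perm (∀ n, Fin (q n)))
    (hT : ∀ x, ∀ n, (∃ k ≤ n, psiInf q σ x k ≠ xMax q hq k) →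
      psiN q σ n (T x) = S (psiN q σ n x))
    (h0 : h 0 = 1) (hrec : ∀ n, h (n + 1) = q n * h n)
    (n : ℕ) (y : ∀ k, Fin (q k)) (hy : ∀ k, k < n → (psiInf q σ y k : ℕ) = 0)
    (b : ℕ) (hb : b < h n) :
    (∀ r, n ≤ r → (⇑T)^[b] y r = y r) ∧
    (∀ k, k < n → (psiInf q σ ((⇑T)^[b] y) k : ℕ) = b / h k % q k) := by
  cases n with
  | zero =>
    have hb0 : b = 0 := by omega
    subst hb0
    exact ⟨fun r _ => rfl, fun k hk => absurd hk (by omega)⟩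
  | succ m =>
    obtain ⟨h1, h2⟩ := odo_main q h hq σ S hS T hT h0 hrec m y
      (fun k hk => hy k (by omega)) b hb
    exact ⟨fun r hr => h1 r (by omega), fun k hk => h2 k (by omega)⟩

end OdoFinal


/-- For an odomutant built with uniformly `c`-multiple permutations fixing `0`:
the `h_n`-word (w.r.t. `P̃(ℓ)`) of a point of `[0,…,0,m]_{n+1}` only depends on `m`,
and the `h_{n+1}`-word of a point of `[0,…,0,x_{n+1}]_{n+2}` is the concatenation
`W^{(n)}_{(σ^{(n)}_{x_{n+1}})^{-1}(0)} ⋯ W^{(n)}_{(σ^{(n)}_{x_{n+1}})^{-1}(q_n−1)}`. -/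
theorem stmt18 (q qt c : ℕ → ℕ) (hc : ∀ n, 0 < c n) (hqc : ∀ n, q n = c n * qt n)
    (hq : ∀ n, 2 ≤ q n)
    (τ : ∀ n, Fin (qt (n + 1)) → Equiv.Perm (Fin (q n)))
    (σ : ∀ n, Fin (q (n + 1)) → Equiv.Perm (Fin (q n)))
    -- σ are the c-multiple permutations built from τ
    (hστ : ∀ n (i : Fin (q (n + 1))) (j : Fin (qt (n + 1))),
      (i : ℕ) / c (n + 1) = (j : ℕ) → σ n i = τ n j)
    -- all the permutations fix 0
    (hσ0 : ∀ n (i : Fin (q (n + 1))) (a : Fin (q n)), (a : ℕ) = 0 → (σ n i a : ℕ) = 0)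
    (S : Equiv.Perm (∀ n, Fin (q n)))
    (hS : ∀ (x : ∀ n, Fin (q n)) (i : ℕ),
      (∀ j, j < i → (x j : ℕ) = q j - 1) → (x i : ℕ) ≠ q i - 1 →
        (∀ j, j < i → (S x j : ℕ) = 0) ∧ (S x i : ℕ) = (x i : ℕ) + 1 ∧
          ∀ j, i < j → S x j = x j)
    (hS' : ∀ (x : ∀ n, Fin (q n)), (∀ j, (x j : ℕ) = q j - 1) → ∀ j, (S x j : ℕ) = 0)
    (T : Equiv.Perm (∀ n, Fin (q n)))
    -- T is the odomutant associated to S and the permutations σ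
    (hT : ∀ x, ∀ n, (∃ k ≤ n, psiInf q σ x k ≠ xMax q hq k) →
      psiN q σ n (T x) = S (psiN q σ n x))
    (h : ℕ → ℕ) (h0 : h 0 = 1) (hrec : ∀ n, h (n + 1) = q n * h n)
    (ℓ : ℕ) (hℓ : 1 ≤ ℓ) (n : ℕ) (hn : ℓ - 1 ≤ n) :
    -- well-definedness of the tower words W^{(m)}_i for m ≥ ℓ−1
    (∀ m : ℕ, ℓ - 1 ≤ m → ∀ (i : Fin (q m)) (y y' : ∀ r, Fin (q r)),
      (∀ r, r < m → (y r : ℕ) = 0) → y m = i →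
      (∀ r, r < m → (y' r : ℕ) = 0) → y' m = i →
        ∀ j, j < h m → codeT q c ℓ ((⇑T)^[j] y) = codeT q c ℓ ((⇑T)^[j] y')) ∧
    -- concatenation: the h_{n+1}-word of x ∈ [0,…,0,x_{n+1}]_{n+2}
    (∀ (xnext : Fin (q (n + 1))) (x : ∀ r, Fin (q r)),
      (∀ r, r < n + 1 → (x r : ℕ) = 0) → x (n + 1) = xnext →
        ∀ (a : Fin (q n)) (b : ℕ), b < h n →
          ∀ y : ∀ r, Fin (q r), (∀ r, r < n → (y r : ℕ) = 0) → y n = (σ n xnext)⁻¹ a →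
            codeT q c ℓ ((⇑T)^[(a : ℕ) * h n + b] x) = codeT q c ℓ ((⇑T)^[b] y)) := by
  classical
  have hh := odo_hPos q h hq h0 hrec
  constructor
  · -- part 1
    intro m hm i y y' hy0 hyi hy'0 hy'i j hj
    have hψy : ∀ k, k < m → (psiInf q σ y k : ℕ) = 0 := fun k hk =>
      hσ0 k (y (k + 1)) (y k) (hy0 k hk)
    have hψy' : ∀ k, k < m → (psiInf q σ y' k : ℕ) = 0 := fun k hk =>
      hσ0 k (y' (k + 1)) (y' k) (hy'0 k hk)
    obtain ⟨hfy, hdy⟩ := odo_main' q h hq σ S hS T hT h0 hrec m y hψy j hj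
    obtain ⟨hfy', hdy'⟩ := odo_main' q h hq σ S hS T hT h0 hrec m y' hψy' j hj
    have hcoords := odo_coordsEq q σ m ((⇑T)^[j] y) ((⇑T)^[j] y')
      (fun k hk => Fin.ext (by rw [hdy k hk, hdy' k hk]))
      (by rw [hfy m le_rfl, hfy' m le_rfl, hyi, hy'i])
    funext r
    have hr : (r : ℕ) ≤ m := by have := r.2; omega
    simp only [codeT]
    rw [hcoords r hr]
  · -- part 2
    intro xnext x hx0 hxtop a b hb y hy0 hyn
    have hψx : ∀ k, k < n + 1 → (psiInf q σ x k : ℕ) = 0 := fun k hk =>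
      hσ0 k (x (k + 1)) (x k) (hx0 k hk)
    have hψy : ∀ k, k < n → (psiInf q σ y k : ℕ) = 0 := fun k hk =>
      hσ0 k (y (k + 1)) (y k) (hy0 k hk)
    have hjlt : (a : ℕ) * h n + b < h (n + 1) := by
      rw [hrec n]
      calc (a : ℕ) * h n + b < (a : ℕ) * h n + h n := by omega
        _ = ((a : ℕ) + 1) * h n := by ring
        _ ≤ q n * h n := Nat.mul_le_mul_right (h n) a.2
    obtain ⟨hfx, hdx⟩ := odo_main' q h hq σ S hS T hT h0 hrec (n + 1) x hψx
      ((a : ℕ) * h n + b) hjlt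
    obtain ⟨hfy, hdy⟩ := odo_main' q h hq σ S hS T hT h0 hrec n y hψy b hb
    have htopx : (⇑T)^[(a : ℕ) * h n + b] x (n + 1) = xnext := by
      rw [hfx (n + 1) le_rfl, hxtop]
    have hdxn : (psiInf q σ ((⇑T)^[(a : ℕ) * h n + b] x) n : ℕ) = (a : ℕ) := by
      rw [hdx n (by omega)]
      exact odo_digitTop q h hq h0 hrec (a : ℕ) b n a.2 hb
    have h1 : psiInf q σ ((⇑T)^[(a : ℕ) * h n + b] x) n = a := Fin.ext hdxn
    have h2 : σ n xnext ((⇑T)^[(a : ℕ) * h n + b] x n) = a := by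
      rw [← htopx]
      exact h1
    have hcoordn : (⇑T)^[(a : ℕ) * h n + b] x n = (σ n xnext)⁻¹ a := by
      have h3 := congrArg (fun t => (σ n xnext)⁻¹ t) h2
      simpa using h3
    have hcoordyn : (⇑T)^[b] y n = (σ n xnext)⁻¹ a := by
      rw [hfy n le_rfl, hyn]
    have hcoords := odo_coordsEq q σ n ((⇑T)^[(a : ℕ) * h n + b] x) ((⇑T)^[b] y)
      (fun k hk => Fin.ext (by
        rw [hdx k (by omega), hdy k hk]
        exact odo_digitSplit q h hq h0 hrec (a : ℕ) b n k hk hb))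
      (hcoordn.trans hcoordyn.symm)
    funext r
    have hr : (r : ℕ) ≤ n := by have := r.2; omega
    simp only [codeT]
    rw [hcoords r hr]

end
end
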